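/- Let α, λ, μ be rational numbers, let s assign a rational number s_I to each 4-element subset I of {1,…,7}, and let p_1,…,p_7 be rationals. If (s,p) is F-nef with parameters (α,λ,μ), then for every 2-element subset {i,j} of {1,…,7}: c_{ij} ≥ 0, where c_{ij} = (1/3)·∑_{I ⊇ {i,j}} s_I + (α+λ)(p_i + p_j) + λ·∑_{k∉{i,j}} p_k (the sum over I ranging over 4-element subsets of {1,…,7}). -/

import Mathlib

open Finset

/-- `(s, p)` is F-nef with parameters `(a, l, m)` (`α`, `λ`, `μ`): the value of the
divisor `D = ∑ s_I S_I + ∑ p_i P_i` on every F-curve of `M̄_{0,7}` is nonnegative,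
for the three combinatorial types `(1:1:1:4)`, `(1:1:2:3)`, `(1:2:2:2)` of partitions
`(A,B,C,D)` of the marked points. -/
def FNef (a l m : ℚ) (s : Finset (Fin 7) → ℚ) (p : Fin 7 → ℚ) : Prop :=
  ∀ A B C D : Finset (Fin 7),
    Disjoint A B → Disjoint A C → Disjoint A D →
    Disjoint B C → Disjoint B D → Disjoint C D →
    A ∪ B ∪ C ∪ D = univ →
    A.Nonempty → B.Nonempty → C.Nonempty → D.Nonempty →
    ((A.card = 1 ∧ B.card = 1 ∧ C.card = 1 ∧ D.card = 4 →
        0 ≤ (∑ I ∈ univ.filter (fun I : Finset (Fin 7) => I.card = 4 ∧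
                (I ∩ A).card = 1 ∧ (I ∩ B).card = 1 ∧ (I ∩ C).card = 1 ∧ (I ∩ D).card = 1),
              s I)
            + (2*a + 3*l - m) * (∑ i ∈ A ∪ B ∪ C, p i)
            + (3*l - m) * (∑ j ∈ D, p j)) ∧
     (A.card = 1 ∧ B.card = 1 ∧ C.card = 2 ∧ D.card = 3 →
        0 ≤ (∑ I ∈ univ.filter (fun I : Finset (Fin 7) => I.card = 4 ∧
                (I ∩ A).card = 1 ∧ (I ∩ B).card = 1 ∧ (I ∩ C).card = 1 ∧ (I ∩ D).card = 1),
              s I)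
            + (a + m) * (∑ i ∈ A ∪ B, p i)
            + (-a + m) * (∑ j ∈ C, p j)
            + m * (∑ k ∈ D, p k)) ∧
     (A.card = 1 ∧ B.card = 2 ∧ C.card = 2 ∧ D.card = 2 →
        0 ≤ (∑ I ∈ univ.filter (fun I : Finset (Fin 7) => I.card = 4 ∧
                (I ∩ A).card = 1 ∧ (I ∩ B).card = 1 ∧ (I ∩ C).card = 1 ∧ (I ∩ D).card = 1),
              s I)
            + 3*(m - l) * (∑ i ∈ A, p i)
            + (-a + 3*(m - l)) * (∑ j ∈ B ∪ C ∪ D, p j)))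

/-- The coefficient `c_J` of the boundary divisor `Δ_J` in the obvious representative of
`D = ∑ s_I S_I + ∑ p_i P_i`, for `J` of cardinality 2 or 3. -/
def cJ (a l m : ℚ) (s : Finset (Fin 7) → ℚ) (p : Fin 7 → ℚ) (J : Finset (Fin 7)) : ℚ :=
  if J.card = 2 then
    (1/3) * (∑ I ∈ univ.filter (fun I : Finset (Fin 7) => I.card = 4 ∧ J ⊆ I), s I)
      + (a + l) * (∑ i ∈ J, p i) + l * (∑ k ∈ Jᶜ, p k)
  else
    (1/3) * (∑ I ∈ univ.filter (fun I : Finset (Fin 7) => I.card = 4 ∧ (I ∩ J).card = 2), s I)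
      + m * (∑ k, p k)


private lemma card_inter_pair {c d : Fin 7} (I : Finset (Fin 7)) (hcd : c ≠ d) :
    (I ∩ {c, d}).card = (if c ∈ I then 1 else 0) + (if d ∈ I then 1 else 0) := by
  rw [Finset.inter_comm, ← Finset.filter_mem_eq_inter, Finset.card_filter,
    Finset.sum_pair hcd]

private lemma card_inter_singleton_eq (I : Finset (Fin 7)) (x : Fin 7) :
    (I ∩ {x}).card = 1 ↔ x ∈ I := by
  by_cases h : x ∈ I
  · simp [Finset.inter_singleton_of_mem h, h]
  · simp [Finset.inter_singleton_of_notMem h, h]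

private lemma card_inter_compl (I t : Finset (Fin 7)) :
    (I ∩ tᶜ).card + (I ∩ t).card = I.card := by
  rw [show I ∩ tᶜ = I \ t from sdiff_eq.symm]
  exact Finset.card_sdiff_add_card_inter I t

private lemma ite_mem' (k : Fin 7) (I : Finset (Fin 7)) (x : ℚ) :
    (if k ∈ I then x else 0) = (if k ∈ I then (1:ℚ) else 0) * x := by
  split <;> ring

private lemma ite_pair (I : Finset (Fin 7)) {c d : Fin 7} (hcd : c ≠ d) (x : ℚ) :
    (if (I ∩ {c, d}).card = 1 then x else 0)
      = ((if c ∈ I then (1:ℚ) else 0) + (if d ∈ I then (1:ℚ) else 0)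
          - 2 * (if c ∈ I then (1:ℚ) else 0) * (if d ∈ I then (1:ℚ) else 0)) * x := by
  rw [card_inter_pair I hcd]
  by_cases hc : c ∈ I <;> by_cases hd : d ∈ I <;> norm_num [hc, hd]

private lemma weights (x b1 b2 b3 b4 b5 : ℚ)
    (h1 : b1^2 = b1) (h2 : b2^2 = b2) (h3 : b3^2 = b3) (h4 : b4^2 = b4) (h5 : b5^2 = b5)
    (hs : b1 + b2 + b3 + b4 + b5 = 2) :
    2*(b1*x + b2*x + b3*x + b4*x + b5*x)
      + ((b1+b2-2*b1*b2)*x + (b1+b3-2*b1*b3)*x + (b1+b4-2*b1*b4)*x + (b1+b5-2*b1*b5)*x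
        + (b2+b3-2*b2*b3)*x + (b2+b4-2*b2*b4)*x + (b2+b5-2*b2*b5)*x
        + (b3+b4-2*b3*b4)*x + (b3+b5-2*b3*b5)*x + (b4+b5-2*b4*b5)*x)
      = 10*x := by
  linear_combination x*(5 - (b1+b2+b3+b4+b5))*hs + x*h1 + x*h2 + x*h3 + x*h4 + x*h5

private lemma exists_five {K : Finset (Fin 7)} (h : K.card = 5) :
    ∃ k1 k2 k3 k4 k5 : Fin 7, k1 ∉ ({k2,k3,k4,k5} : Finset (Fin 7)) ∧
      k2 ∉ ({k3,k4,k5} : Finset (Fin 7)) ∧ k3 ∉ ({k4,k5} : Finset (Fin 7)) ∧ k4 ≠ k5 ∧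
      K = {k1,k2,k3,k4,k5} := by
  obtain ⟨k1, t1, h1, rfl, hc1⟩ := Finset.card_eq_succ.mp h
  obtain ⟨k2, t2, h2, rfl, hc2⟩ := Finset.card_eq_succ.mp hc1
  obtain ⟨k3, t3, h3, rfl, hc3⟩ := Finset.card_eq_succ.mp hc2
  obtain ⟨k4, t4, h4, rfl, hc4⟩ := Finset.card_eq_succ.mp hc3
  obtain ⟨k5, hc5⟩ := Finset.card_eq_one.mp hc4
  subst hc5
  exact ⟨k1, k2, k3, k4, k5, h1, h2, h3, by simpa using h4, rfl⟩
private lemma ineq1 (a l m : ℚ) (s : Finset (Fin 7) → ℚ) (p : Fin 7 → ℚ)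
    (hF : FNef a l m s p) (i j k : Fin 7) (hij : i ≠ j) (hik : i ≠ k) (hjk : j ≠ k) :
    0 ≤ (∑ I ∈ univ.filter (fun I : Finset (Fin 7) => I.card = 4 ∧ i ∈ I ∧ j ∈ I ∧ k ∈ I), s I)
        + (2*a + 3*l - m) * (p i + p j + p k)
        + (3*l - m) * ((∑ x, p x) - (p i + p j + p k)) := by
  have hc3 : ({i, j, k} : Finset (Fin 7)).card = 3 := by
    rw [Finset.card_insert_of_notMem (by simp [hij, hik]),
      Finset.card_pair hjk]
  have hc4 : (({i, j, k} : Finset (Fin 7))ᶜ).card = 4 := by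
    rw [Finset.card_compl, hc3, Fintype.card_fin]
  have h := (hF {i} {j} {k} (({i, j, k} : Finset (Fin 7))ᶜ)
      (by simp [hij.symm, hij])
      (by simp [hik.symm, hik])
      (by simp [Finset.disjoint_left])
      (by simp [hjk.symm, hjk])
      (by simp [Finset.disjoint_left])
      (by simp [Finset.disjoint_left])
      (by rw [show ({i} : Finset (Fin 7)) ∪ {j} ∪ {k} = {i, j, k} from by
            ext x; simp [or_assoc]]
          exact Finset.union_compl _)
      (Finset.singleton_nonempty i) (Finset.singleton_nonempty j)
      (Finset.singleton_nonempty k)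
      (Finset.card_pos.mp (by rw [hc4]; norm_num))).1
      ⟨Finset.card_singleton i, Finset.card_singleton j, Finset.card_singleton k, hc4⟩
  have hpred : ∀ I ∈ (univ : Finset (Finset (Fin 7))),
      (I.card = 4 ∧ (I ∩ {i}).card = 1 ∧ (I ∩ {j}).card = 1 ∧ (I ∩ {k}).card = 1 ∧
        (I ∩ (({i, j, k} : Finset (Fin 7))ᶜ)).card = 1)
      ↔ (I.card = 4 ∧ i ∈ I ∧ j ∈ I ∧ k ∈ I) := by
    intro I _
    rw [card_inter_singleton_eq, card_inter_singleton_eq, card_inter_singleton_eq]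
    constructor
    · rintro ⟨h4, hi, hj, hk, -⟩; exact ⟨h4, hi, hj, hk⟩
    · rintro ⟨h4, hi, hj, hk⟩
      refine ⟨h4, hi, hj, hk, ?_⟩
      have h1 := card_inter_compl I {i, j, k}
      have h2 : I ∩ ({i, j, k} : Finset (Fin 7)) = {i, j, k} := Finset.inter_eq_right.mpr
        (by intro x hx; simp at hx; rcases hx with rfl | rfl | rfl <;> assumption)
      rw [h2, hc3, h4] at h1
      omega
  rw [Finset.filter_congr hpred,
    show ({i} : Finset (Fin 7)) ∪ {j} ∪ {k} = {i, j, k} from by ext x; simp [or_assoc],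
    show ∑ x ∈ ({i, j, k} : Finset (Fin 7)), p x = p i + p j + p k from by
      rw [Finset.sum_insert (by simp [hij, hik]), Finset.sum_pair hjk]; ring,
    show ∑ x ∈ (({i, j, k} : Finset (Fin 7))ᶜ), p x = (∑ x, p x) - (p i + p j + p k) from by
      have h2 := Finset.sum_compl_add_sum ({i, j, k} : Finset (Fin 7)) p
      rw [Finset.sum_insert (by simp [hij, hik]), Finset.sum_pair hjk] at h2
      linarith] at h
  exact h
private lemma ineq2 (a l m : ℚ) (s : Finset (Fin 7) → ℚ) (p : Fin 7 → ℚ)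
    (hF : FNef a l m s p) (i j c d : Fin 7) (hij : i ≠ j) (hic : i ≠ c) (hid : i ≠ d)
    (hjc : j ≠ c) (hjd : j ≠ d) (hcd : c ≠ d) :
    0 ≤ (∑ I ∈ univ.filter (fun I : Finset (Fin 7) =>
            I.card = 4 ∧ i ∈ I ∧ j ∈ I ∧ (I ∩ {c, d}).card = 1), s I)
        + (a + m) * (p i + p j)
        + (-a + m) * (p c + p d)
        + m * ((∑ x, p x) - (p i + p j + p c + p d)) := by
  have hc4 : ({i, j, c, d} : Finset (Fin 7)).card = 4 := by
    rw [Finset.card_insert_of_notMem (by simp [hij, hic, hid]),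
      Finset.card_insert_of_notMem (by simp [hjc, hjd]), Finset.card_pair hcd]
  have hc3 : (({i, j, c, d} : Finset (Fin 7))ᶜ).card = 3 := by
    rw [Finset.card_compl, hc4, Fintype.card_fin]
  have h := (hF {i} {j} {c, d} (({i, j, c, d} : Finset (Fin 7))ᶜ)
      (by simp [hij.symm, hij])
      (by simp [Finset.disjoint_left, hic, hid])
      (by simp [Finset.disjoint_left])
      (by simp [Finset.disjoint_left, hjc, hjd])
      (by simp [Finset.disjoint_left])
      (by simp [Finset.disjoint_left])
      (by rw [show ({i} : Finset (Fin 7)) ∪ {j} ∪ {c, d} = {i, j, c, d} from by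
            ext x; simp only [Finset.mem_union, Finset.mem_insert, Finset.mem_singleton]; tauto]
          exact Finset.union_compl _)
      (Finset.singleton_nonempty i) (Finset.singleton_nonempty j)
      (Finset.insert_nonempty c {d})
      (Finset.card_pos.mp (by rw [hc3]; norm_num))).2.1
      ⟨Finset.card_singleton i, Finset.card_singleton j, Finset.card_pair hcd, hc3⟩
  have hpred : ∀ I ∈ (univ : Finset (Finset (Fin 7))),
      (I.card = 4 ∧ (I ∩ {i}).card = 1 ∧ (I ∩ {j}).card = 1 ∧ (I ∩ {c, d}).card = 1 ∧
        (I ∩ (({i, j, c, d} : Finset (Fin 7))ᶜ)).card = 1)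
      ↔ (I.card = 4 ∧ i ∈ I ∧ j ∈ I ∧ (I ∩ {c, d}).card = 1) := by
    intro I _
    rw [card_inter_singleton_eq, card_inter_singleton_eq]
    constructor
    · rintro ⟨h4, hi, hj, hcd1, -⟩; exact ⟨h4, hi, hj, hcd1⟩
    · rintro ⟨h4, hi, hj, hcd1⟩
      refine ⟨h4, hi, hj, hcd1, ?_⟩
      have h1 := card_inter_compl I {i, j, c, d}
      have h2 : I ∩ ({i, j, c, d} : Finset (Fin 7))
          = (I ∩ {i, j}) ∪ (I ∩ ({c, d} : Finset (Fin 7))) := by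
        rw [← Finset.inter_union_distrib_left]
        congr 1
        ext x; simp only [Finset.mem_union, Finset.mem_insert, Finset.mem_singleton]; tauto
      have hdisj : Disjoint (I ∩ ({i, j} : Finset (Fin 7))) (I ∩ ({c, d} : Finset (Fin 7))) := by
        rw [Finset.disjoint_left]
        intro x hx1 hx2
        simp only [Finset.mem_inter, Finset.mem_insert, Finset.mem_singleton] at hx1 hx2
        rcases hx1.2 with rfl | rfl <;> rcases hx2.2 with rfl | rfl <;> simp_all
      have h3 : (I ∩ ({i, j} : Finset (Fin 7))).card = 2 := by
        rw [card_inter_pair I hij, if_pos hi, if_pos hj]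
      rw [h2, Finset.card_union_of_disjoint hdisj, h3, hcd1, h4] at h1
      omega
  rw [Finset.filter_congr hpred,
    show ({i} : Finset (Fin 7)) ∪ {j} = {i, j} from by ext x; simp,
    Finset.sum_pair hij, Finset.sum_pair hcd,
    show ∑ x ∈ (({i, j, c, d} : Finset (Fin 7))ᶜ), p x
        = (∑ x, p x) - (p i + p j + p c + p d) from by
      have h2 := Finset.sum_compl_add_sum ({i, j, c, d} : Finset (Fin 7)) p
      rw [Finset.sum_insert (by simp [hij, hic, hid]),
        Finset.sum_insert (by simp [hjc, hjd]), Finset.sum_pair hcd] at h2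
      linarith] at h
  exact h
/-- For any parameters, every F-nef divisor on `M̄_{0,7}` has nonnegative coefficients on
all boundary divisors `Δ_{ij}`. -/
theorem stmt6 (a l m : ℚ) (s : Finset (Fin 7) → ℚ) (p : Fin 7 → ℚ)
    (hF : FNef a l m s p) (i j : Fin 7) (hij : i ≠ j) :
    0 ≤ cJ a l m s p {i, j} := by
  have hK5 : ((({i, j} : Finset (Fin 7)))ᶜ).card = 5 := by
    rw [Finset.card_compl, Finset.card_pair hij, Fintype.card_fin]
  obtain ⟨k1, k2, k3, k4, k5, hn1, hn2, hn3, h45, hKeq⟩ := exists_five hK5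
  have h12 : k1 ≠ k2 := fun h => hn1 (by simp [h])
  have h13 : k1 ≠ k3 := fun h => hn1 (by simp [h])
  have h14 : k1 ≠ k4 := fun h => hn1 (by simp [h])
  have h15 : k1 ≠ k5 := fun h => hn1 (by simp [h])
  have h23 : k2 ≠ k3 := fun h => hn2 (by simp [h])
  have h24 : k2 ≠ k4 := fun h => hn2 (by simp [h])
  have h25 : k2 ≠ k5 := fun h => hn2 (by simp [h])
  have h34 : k3 ≠ k4 := fun h => hn3 (by simp [h])
  have h35 : k3 ≠ k5 := fun h => hn3 (by simp [h])
  have hmem : ∀ x ∈ ({k1, k2, k3, k4, k5} : Finset (Fin 7)), x ≠ i ∧ x ≠ j := by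
    intro x hx
    have hx' : x ∈ ((({i, j} : Finset (Fin 7)))ᶜ) := by rw [hKeq]; exact hx
    simp only [Finset.mem_compl, Finset.mem_insert, Finset.mem_singleton] at hx'
    push_neg at hx'
    exact hx'
  have hm1 := hmem k1 (by simp)
  have hm2 := hmem k2 (by simp)
  have hm3 := hmem k3 (by simp)
  have hm4 := hmem k4 (by simp)
  have hm5 := hmem k5 (by simp)
  have HT1 := ineq1 a l m s p hF i j k1 hij hm1.1.symm hm1.2.symm
  have HT2 := ineq1 a l m s p hF i j k2 hij hm2.1.symm hm2.2.symm
  have HT3 := ineq1 a l m s p hF i j k3 hij hm3.1.symm hm3.2.symm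
  have HT4 := ineq1 a l m s p hF i j k4 hij hm4.1.symm hm4.2.symm
  have HT5 := ineq1 a l m s p hF i j k5 hij hm5.1.symm hm5.2.symm
  have HU12 := ineq2 a l m s p hF i j k1 k2 hij hm1.1.symm hm2.1.symm hm1.2.symm hm2.2.symm h12
  have HU13 := ineq2 a l m s p hF i j k1 k3 hij hm1.1.symm hm3.1.symm hm1.2.symm hm3.2.symm h13
  have HU14 := ineq2 a l m s p hF i j k1 k4 hij hm1.1.symm hm4.1.symm hm1.2.symm hm4.2.symm h14
  have HU15 := ineq2 a l m s p hF i j k1 k5 hij hm1.1.symm hm5.1.symm hm1.2.symm hm5.2.symm h15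
  have HU23 := ineq2 a l m s p hF i j k2 k3 hij hm2.1.symm hm3.1.symm hm2.2.symm hm3.2.symm h23
  have HU24 := ineq2 a l m s p hF i j k2 k4 hij hm2.1.symm hm4.1.symm hm2.2.symm hm4.2.symm h24
  have HU25 := ineq2 a l m s p hF i j k2 k5 hij hm2.1.symm hm5.1.symm hm2.2.symm hm5.2.symm h25
  have HU34 := ineq2 a l m s p hF i j k3 k4 hij hm3.1.symm hm4.1.symm hm3.2.symm hm4.2.symm h34
  have HU35 := ineq2 a l m s p hF i j k3 k5 hij hm3.1.symm hm5.1.symm hm3.2.symm hm5.2.symm h35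
  have HU45 := ineq2 a l m s p hF i j k4 k5 hij hm4.1.symm hm5.1.symm hm4.2.symm hm5.2.symm h45
  have hT : 2*((∑ I ∈ univ.filter (fun I : Finset (Fin 7) => I.card = 4 ∧ i ∈ I ∧ j ∈ I ∧ k1 ∈ I), s I) + (∑ I ∈ univ.filter (fun I : Finset (Fin 7) => I.card = 4 ∧ i ∈ I ∧ j ∈ I ∧ k2 ∈ I), s I) + (∑ I ∈ univ.filter (fun I : Finset (Fin 7) => I.card = 4 ∧ i ∈ I ∧ j ∈ I ∧ k3 ∈ I), s I) + (∑ I ∈ univ.filter (fun I : Finset (Fin 7) => I.card = 4 ∧ i ∈ I ∧ j ∈ I ∧ k4 ∈ I), s I) + (∑ I ∈ univ.filter (fun I : Finset (Fin 7) => I.card = 4 ∧ i ∈ I ∧ j ∈ I ∧ k5 ∈ I), s I))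
      + ((∑ I ∈ univ.filter (fun I : Finset (Fin 7) => I.card = 4 ∧ i ∈ I ∧ j ∈ I ∧ (I ∩ {k1, k2}).card = 1), s I) + (∑ I ∈ univ.filter (fun I : Finset (Fin 7) => I.card = 4 ∧ i ∈ I ∧ j ∈ I ∧ (I ∩ {k1, k3}).card = 1), s I) + (∑ I ∈ univ.filter (fun I : Finset (Fin 7) => I.card = 4 ∧ i ∈ I ∧ j ∈ I ∧ (I ∩ {k1, k4}).card = 1), s I) + (∑ I ∈ univ.filter (fun I : Finset (Fin 7) => I.card = 4 ∧ i ∈ I ∧ j ∈ I ∧ (I ∩ {k1, k5}).card = 1), s I) + (∑ I ∈ univ.filter (fun I : Finset (Fin 7) => I.card = 4 ∧ i ∈ I ∧ j ∈ I ∧ (I ∩ {k2, k3}).card = 1), s I) + (∑ I ∈ univ.filter (fun I : Finset (Fin 7) => I.card = 4 ∧ i ∈ I ∧ j ∈ I ∧ (I ∩ {k2, k4}).card = 1), s I) + (∑ I ∈ univ.filter (fun I : Finset (Fin 7) => I.card = 4 ∧ i ∈ I ∧ j ∈ I ∧ (I ∩ {k2, k5}).card = 1), s I) + (∑ I ∈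 univ.filter (fun I : Finset (Fin 7) => I.card = 4 ∧ i ∈ I ∧ j ∈ I ∧ (I ∩ {k3, k4}).card = 1), s I) + (∑ I ∈ univ.filter (fun I : Finset (Fin 7) => I.card = 4 ∧ i ∈ I ∧ j ∈ I ∧ (I ∩ {k3, k5}).card = 1), s I) + (∑ I ∈ univ.filter (fun I : Finset (Fin 7) => I.card = 4 ∧ i ∈ I ∧ j ∈ I ∧ (I ∩ {k4, k5}).card = 1), s I))
      = 10 * (∑ I ∈ univ.filter (fun I : Finset (Fin 7) => I.card = 4 ∧ i ∈ I ∧ j ∈ I), s I) := by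
    simp only [Finset.sum_filter, ← Finset.sum_add_distrib]
    rw [Finset.mul_sum, Finset.mul_sum, ← Finset.sum_add_distrib]
    refine Finset.sum_congr rfl fun I _ => ?_
    by_cases h4 : I.card = 4
    · by_cases hi : i ∈ I
      · by_cases hj : j ∈ I
        · simp only [h4, hi, hj, eq_self_iff_true, true_and, and_true, if_true]
          rw [
          ite_mem' k1 I (s I),
          ite_mem' k2 I (s I),
          ite_mem' k3 I (s I),
          ite_mem' k4 I (s I),
          ite_mem' k5 I (s I),
          ite_pair I h12 (s I),
          ite_pair I h13 (s I),
          ite_pair I h14 (s I),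
          ite_pair I h15 (s I),
          ite_pair I h23 (s I),
          ite_pair I h24 (s I),
          ite_pair I h25 (s I),
          ite_pair I h34 (s I),
          ite_pair I h35 (s I),
          ite_pair I h45 (s I)]
          have hnat : (I ∩ ({k1, k2, k3, k4, k5} : Finset (Fin 7))).card = 2 := by
            rw [← hKeq, show I ∩ ((({i, j} : Finset (Fin 7)))ᶜ) = I \ {i, j} from sdiff_eq.symm,
              Finset.card_sdiff_of_subset (by intro x hx; simp at hx; rcases hx with rfl | rfl <;> assumption),
              h4, Finset.card_pair hij]
          rw [Finset.inter_comm, ← Finset.filter_mem_eq_inter, Finset.card_filter,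
            Finset.sum_insert hn1, Finset.sum_insert hn2, Finset.sum_insert hn3,
            Finset.sum_pair h45] at hnat
          have hQ : (if k1 ∈ I then (1:ℚ) else 0) + (if k2 ∈ I then (1:ℚ) else 0) + (if k3 ∈ I then (1:ℚ) else 0) + (if k4 ∈ I then (1:ℚ) else 0) + (if k5 ∈ I then (1:ℚ) else 0) = 2 := by
            by_cases b1 : k1 ∈ I <;>
            by_cases b2 : k2 ∈ I <;>
            by_cases b3 : k3 ∈ I <;>
            by_cases b4 : k4 ∈ I <;>
            by_cases b5 : k5 ∈ I <;>
            simp only [b1, b2, b3, b4, b5, if_true, if_false] at hnat ⊢ <;>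
            norm_num at hnat <;> norm_num
          have hb1 : (if k1 ∈ I then (1:ℚ) else 0)^2 = (if k1 ∈ I then (1:ℚ) else 0) := by
            split <;> norm_num
          have hb2 : (if k2 ∈ I then (1:ℚ) else 0)^2 = (if k2 ∈ I then (1:ℚ) else 0) := by
            split <;> norm_num
          have hb3 : (if k3 ∈ I then (1:ℚ) else 0)^2 = (if k3 ∈ I then (1:ℚ) else 0) := by
            split <;> norm_num
          have hb4 : (if k4 ∈ I then (1:ℚ) else 0)^2 = (if k4 ∈ I then (1:ℚ) else 0) := by
            split <;> norm_num
          have hb5 : (if k5 ∈ I then (1:ℚ) else 0)^2 = (if k5 ∈ I then (1:ℚ) else 0) := by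
            split <;> norm_num
          exact weights (s I) _ _ _ _ _ hb1 hb2 hb3 hb4 hb5 hQ
        · simp [hj]
      · simp [hi]
    · simp [h4]
  have hfil : univ.filter (fun I : Finset (Fin 7) => I.card = 4 ∧ ({i, j} : Finset (Fin 7)) ⊆ I)
      = univ.filter (fun I : Finset (Fin 7) => I.card = 4 ∧ i ∈ I ∧ j ∈ I) :=
    Finset.filter_congr fun I _ => by simp [Finset.insert_subset_iff, and_assoc]
  have hcompl : ∑ k ∈ ((({i, j} : Finset (Fin 7)))ᶜ), p k = (∑ x, p x) - (p i + p j) := by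
    have h2 := Finset.sum_compl_add_sum ({i, j} : Finset (Fin 7)) p
    rw [Finset.sum_pair hij] at h2
    linarith
  unfold cJ
  rw [if_pos (Finset.card_pair hij), hfil, Finset.sum_pair hij, hcompl]
  linarith [HT1, HT2, HT3, HT4, HT5, HU12, HU13, HU14, HU15, HU23, HU24, HU25, HU34, HU35, HU45, hT]
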